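/- arXiv:2003.06706 — 6 statements merged into one kernel-verified Lean document; each statement's English description precedes it below -/
import Mathlib

section
/- For every d : ℕ, every finite set X ⊆ EuclideanSpace ℝ (Fin d), and every function f : EuclideanSpace ℝ (Fin d) → ℝ, there exist n : ℕ, vectors a : Fin n → EuclideanSpace ℝ (Fin d), reals b c : Fin n → ℝ, and d₀ : ℝ, such that for all x ∈ X, f x = d₀ + ∑ i, c i * max 0 (⟪a i, x⟫ + b i). That is, any function on a finite subset of ℝ^d is perfectly represented (zero sup-norm error) by a single-hidden-layer ReLU neural network. -/
lemma exists_separating_direction {d : ℕ} (s : Finset (EuclideanSpace ℝ (Fin d))) :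
    ∃ v : EuclideanSpace ℝ (Fin d), ∀ x ∈ s, ∀ y ∈ s, x ≠ y →
      (inner ℝ v x : ℝ) ≠ (inner ℝ v y : ℝ) := by
  classical
  by_contra h
  push_neg at h
  have hcov : ⋃ (π : ↥s.offDiag), ((LinearMap.ker ((innerSL ℝ ((π : EuclideanSpace ℝ (Fin d) × EuclideanSpace ℝ (Fin d)).1 - (π : EuclideanSpace ℝ (Fin d) × EuclideanSpace ℝ (Fin d)).2)).toLinearMap) : Subspace ℝ (EuclideanSpace ℝ (Fin d))) : Set (EuclideanSpace ℝ (Fin d))) = Set.univ := by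
    ext v
    simp only [Set.mem_iUnion, Set.mem_univ, iff_true]
    obtain ⟨x, hx, y, hy, hxy, heq⟩ := h v
    refine ⟨⟨(x, y), Finset.mem_offDiag.2 ⟨hx, hy, hxy⟩⟩, ?_⟩
    simp only [SetLike.mem_coe, LinearMap.mem_ker]
    show (inner ℝ (x - y) v : ℝ) = 0
    rw [real_inner_comm, inner_sub_right, heq, sub_self]
  obtain ⟨⟨⟨x, y⟩, hxy⟩, htop⟩ := Subspace.exists_eq_top_of_iUnion_eq_univ hcov
  have hm : x - y ∈ LinearMap.ker ((innerSL ℝ (x - y)).toLinearMap) := htop ▸ Submodule.mem_top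
  rw [LinearMap.mem_ker] at hm
  have h0 : (inner ℝ (x - y) (x - y) : ℝ) = 0 := hm
  rw [inner_self_eq_zero, sub_eq_zero] at h0
  exact (Finset.mem_offDiag.1 hxy).2.2 h0

lemma hat_eq_zero {u ε : ℝ} (hε : 0 < ε) (h : ε ≤ |u|) :
    max 0 (u + ε) - 2 * max 0 u + max 0 (u - ε) = 0 := by
  rcases le_abs.1 h with h1 | h1
  · rw [max_eq_right, max_eq_right, max_eq_right] <;> linarith
  · rw [max_eq_left, max_eq_left, max_eq_left] <;> linarith

lemma hat_eq_eps {ε : ℝ} (hε : 0 < ε) :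
    max 0 ((0:ℝ) + ε) - 2 * max 0 (0:ℝ) + max 0 ((0:ℝ) - ε) = ε := by
  rw [max_eq_right (by linarith), max_self, max_eq_left (by linarith)]
  ring

/-- Any function on a finite subset of `ℝ^d` is perfectly represented (zero
sup-norm error) by a single-hidden-layer ReLU neural network
`x ↦ d₀ + ∑ i, c i * max 0 (⟪a i, x⟫ + b i)`. -/
theorem finite_universal_approximation (d : ℕ)
    (X : Set (EuclideanSpace ℝ (Fin d))) (hX : X.Finite)
    (f : EuclideanSpace ℝ (Fin d) → ℝ) :
    ∃ (n : ℕ) (a : Fin n → EuclideanSpace ℝ (Fin d)) (b c : Fin n → ℝ) (d₀ : ℝ),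
      ∀ x ∈ X, f x = d₀ + ∑ i, c i * max 0 ((inner ℝ (a i) x : ℝ) + b i) := by
  classical
  set s : Finset (EuclideanSpace ℝ (Fin d)) := hX.toFinset with hs
  obtain ⟨v, hv⟩ := exists_separating_direction s
  set ε : ℝ := if h : s.offDiag.Nonempty then
      s.offDiag.inf' h (fun p => |(inner ℝ v p.1 : ℝ) - (inner ℝ v p.2 : ℝ)|) else 1 with hεdef
  have hε : 0 < ε := by
    rw [hεdef]
    split_ifs with h
    · rw [Finset.lt_inf'_iff]
      intro p hp
      obtain ⟨h1, h2, h3⟩ := Finset.mem_offDiag.1 hp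
      exact abs_pos.2 (sub_ne_zero.2 (hv _ h1 _ h2 h3))
    · norm_num
  have hεle : ∀ x ∈ s, ∀ y ∈ s, x ≠ y →
      ε ≤ |(inner ℝ v x : ℝ) - (inner ℝ v y : ℝ)| := by
    intro x hx y hy hxy
    have hp : (x, y) ∈ s.offDiag := Finset.mem_offDiag.2 ⟨hx, hy, hxy⟩
    rw [hεdef, dif_pos ⟨_, hp⟩]
    exact Finset.inf'_le _ hp
  set ι := (↥s × Fin 3)
  refine ⟨Fintype.card ι, fun _ => v,
    (fun p : ι => -(inner ℝ v (p.1 : EuclideanSpace ℝ (Fin d)) : ℝ) + ![ε, 0, -ε] p.2) ∘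
      (Fintype.equivFin ι).symm,
    (fun p : ι => (f p.1 / ε) * ![1, -2, 1] p.2) ∘ (Fintype.equivFin ι).symm, 0, ?_⟩
  intro x hxX
  have hx : x ∈ s := hX.mem_toFinset.2 hxX
  rw [zero_add]
  have step1 : (∑ i : Fin (Fintype.card ι),
      ((fun p : ι => (f p.1 / ε) * ![1, -2, 1] p.2) ∘ (Fintype.equivFin ι).symm) i *
        max 0 ((inner ℝ ((fun _ : Fin (Fintype.card ι) => v) i) x : ℝ) +
          ((fun p : ι => -(inner ℝ v (p.1 : EuclideanSpace ℝ (Fin d)) : ℝ) + ![ε, 0, -ε] p.2) ∘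
            (Fintype.equivFin ι).symm) i))
      = ∑ p : ι, (f p.1 / ε) * ![1, -2, 1] p.2 *
          max 0 ((inner ℝ v x : ℝ) +
            (-(inner ℝ v (p.1 : EuclideanSpace ℝ (Fin d)) : ℝ) + ![ε, 0, -ε] p.2)) :=
    Fintype.sum_equiv (Fintype.equivFin ι).symm _ _ (fun i => rfl)
  rw [step1, Fintype.sum_prod_type]
  have key : ∀ y : ↥s, (∑ j : Fin 3, (f y / ε) * ![1, -2, 1] j *
      max 0 ((inner ℝ v x : ℝ) + (-(inner ℝ v (y : EuclideanSpace ℝ (Fin d)) : ℝ) + ![ε, 0, -ε] j)))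
      = (f y / ε) * (max 0 (((inner ℝ v x : ℝ) - inner ℝ v (y : EuclideanSpace ℝ (Fin d))) + ε)
        - 2 * max 0 ((inner ℝ v x : ℝ) - inner ℝ v (y : EuclideanSpace ℝ (Fin d)))
        + max 0 (((inner ℝ v x : ℝ) - inner ℝ v (y : EuclideanSpace ℝ (Fin d))) - ε)) := by
    intro y
    rw [Fin.sum_univ_three]
    simp only [Matrix.cons_val_zero, Matrix.cons_val_one, Matrix.head_cons,
      Matrix.cons_val_two, Matrix.tail_cons]
    ring_nf
  simp only [key]
  rw [Fintype.sum_eq_single (⟨x, hx⟩ : ↥s)]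
  · have : (inner ℝ v x : ℝ) - inner ℝ v ((⟨x, hx⟩ : ↥s) : EuclideanSpace ℝ (Fin d)) = 0 := by
      simp
    rw [this, hat_eq_eps hε, div_mul_cancel₀ _ (ne_of_gt hε)]
  · intro y hy
    have hyx : (y : EuclideanSpace ℝ (Fin d)) ≠ x := by
      intro h; exact hy (Subtype.ext h)
    rw [hat_eq_zero hε (hεle x hx y y.2 (Ne.symm hyx)), mul_zero]
end

section
/- Let 𝒢 denote the type of finite labeled multigraphs with isomorphism ≃, fix b d : ℕ, and let 𝒢_b denote the set of multigraphs of size at most b. Let Alg : 𝒢 → EuclideanSpace ℝ (Fin d) satisfy iso-injectivity on 𝒢_b (for G, H ∈ 𝒢_b, Alg G = Alg H implies G ≃ H), and let f : 𝒢 → ℝ be isomorphism-invariant (G ≃ H implies f G = f H). Then there exist n : ℕ, a : Fin n → EuclideanSpace ℝ (Fin d), b' c : Fin n → ℝ, and d₀ : ℝ such that for every G ∈ 𝒢_b, f G = d₀ + ∑ i, c i * max 0 (⟪a i, Alg G⟫ + b' i). That is, every isomorphism-invariant function on bounded graphs is perfectly approximated by an iso-injective encoding composed with a single-hidden-layer ReLU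 neural network. -/
open scoped RealInnerProductSpace

/-- A finite vertex-labeled multigraph: a number of vertices `n`, a multiset of
unordered pairs of vertices as edges, and a vertex labeling into `ℕ+`. -/
def MGraph : Type := Σ n : ℕ, Multiset (Sym2 (Fin n)) × (Fin n → ℕ+)

/-- Isomorphism of labeled multigraphs: a vertex bijection preserving the edge
multiset and the labels. -/
def MGraph.Iso (G H : MGraph) : Prop :=
  ∃ φ : Fin G.1 ≃ Fin H.1,
    Multiset.map (Sym2.map φ) G.2.1 = H.2.1 ∧ (H.2.2 ∘ φ = G.2.2)

/-- The size of a multigraph: number of vertices plus number of edges plus the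
maximum label value (0 if there are no vertices). -/
def MGraph.size (G : MGraph) : ℕ :=
  G.1 + Multiset.card G.2.1 + Finset.univ.sup (fun i => (G.2.2 i : ℕ))

lemma multiset_card_le_finite (α : Type) [Fintype α] (b : ℕ) :
    {m : Multiset α | Multiset.card m ≤ b}.Finite := by
  apply Set.Finite.subset ((List.finite_length_le α b).image (fun l : List α => (l : Multiset α)))
  intro m hm
  exact ⟨m.toList, by simpa using hm, by simp⟩

lemma labels_finite (n b : ℕ) : {l : Fin n → ℕ+ | ∀ i, (l i : ℕ) ≤ b}.Finite := by
  have h1 : {x : ℕ+ | (x : ℕ) ≤ b}.Finite :=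
    Set.Finite.preimage (Set.injOn_of_injective PNat.coe_injective) (Set.finite_Iic b)
  apply (Set.Finite.pi (fun _ : Fin n => h1)).subset
  intro l hl
  simp only [Set.mem_pi] at *
  exact fun i _ => hl i

lemma mgraph_size_le_finite (b : ℕ) : {G : MGraph | G.size ≤ b}.Finite := by
  have hbig : Set.Finite (⋃ n ∈ Finset.range (b + 1),
      Sigma.mk n '' (({m : Multiset (Sym2 (Fin n)) | Multiset.card m ≤ b} ×ˢ
        {l : Fin n → ℕ+ | ∀ i, (l i : ℕ) ≤ b}) :
          Set (Multiset (Sym2 (Fin n)) × (Fin n → ℕ+)))) := by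
    apply Set.Finite.biUnion (Finset.range (b + 1)).finite_toSet
    intro n _
    exact (((multiset_card_le_finite _ b).prod (labels_finite n b)).image _)
  apply hbig.subset
  intro G hG
  have hG' : G.1 + Multiset.card G.2.1 + Finset.univ.sup (fun i => (G.2.2 i : ℕ)) ≤ b := hG
  simp only [Set.mem_iUnion, Finset.mem_coe, Finset.mem_range]
  refine ⟨G.1, by omega, (G.2.1, G.2.2), ⟨?_, ?_⟩, rfl⟩
  · simp only [Set.mem_setOf_eq]; omega
  · intro i
    have h2 : (G.2.2 i : ℕ) ≤ Finset.univ.sup (fun i => (G.2.2 i : ℕ)) :=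
      Finset.le_sup (f := fun j => (G.2.2 j : ℕ)) (Finset.mem_univ i)
    simp only [Set.mem_setOf_eq]
    omega

lemma exists_separating_vector {E : Type*} [NormedAddCommGroup E] [InnerProductSpace ℝ E]
    (T : Finset E) (hT : ∀ w ∈ T, w ≠ 0) : ∃ v : E, ∀ w ∈ T, ⟪v, w⟫ ≠ 0 := by
  by_contra hc
  push_neg at hc
  have hcov : ⋃ w : T, ((LinearMap.ker ((innerSL ℝ (w : E) : E →L[ℝ] ℝ) : E →ₗ[ℝ] ℝ) : Subspace ℝ E) : Set E) =
      Set.univ := by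
    ext v
    simp only [Set.mem_iUnion, Set.mem_univ, iff_true, SetLike.mem_coe, LinearMap.mem_ker]
    obtain ⟨w, hw, hvw⟩ := hc v
    exact ⟨⟨w, hw⟩, by simpa [real_inner_comm] using hvw⟩
  obtain ⟨⟨w, hw⟩, hker⟩ := Subspace.exists_eq_top_of_iUnion_eq_univ hcov
  have : ⟪w, w⟫ = 0 := by
    have := hker ▸ Submodule.mem_top (R := ℝ) (x := w)
    simpa using this
  exact hT w hw (inner_self_eq_zero.mp this)

lemma relu_interp (S : Finset ℝ) (y : ℝ → ℝ) :
    ∃ (n : ℕ) (α β c : Fin n → ℝ) (d₀ : ℝ),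
      ∀ t ∈ S, y t = d₀ + ∑ i, c i * max 0 (α i * t + β i) := by
  induction S using Finset.strongInduction with
  | _ S ih =>
    rcases S.eq_empty_or_nonempty with rfl | hS
    · exact ⟨0, Fin.elim0, Fin.elim0, Fin.elim0, 0, by simp⟩
    · set m := S.max' hS with hm
      set S' := S.erase m with hS'
      obtain ⟨n, α, β, c, d₀, h⟩ := ih S' (Finset.erase_ssubset (S.max'_mem hS))
      set θ : ℝ := if h' : S'.Nonempty then S'.max' h' else m - 1 with hθdef
      have hθlt : θ < m := by
        rw [hθdef]
        split_ifs with h'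
        · have hmem := S'.max'_mem h'
          have h1 : S'.max' h' ∈ S := Finset.mem_of_mem_erase hmem
          have h2 : S'.max' h' ≠ m := Finset.ne_of_mem_erase hmem
          exact lt_of_le_of_ne (S.le_max' _ h1) h2
        · linarith
      have hθle : ∀ t ∈ S', t ≤ θ := by
        intro t ht
        rw [hθdef]
        split_ifs with h'
        · exact S'.le_max' t ht
        · exact absurd ⟨t, ht⟩ h'
      set N : ℝ → ℝ := fun t => d₀ + ∑ i, c i * max 0 (α i * t + β i) with hN
      refine ⟨n + 1, Fin.cons 1 α, Fin.cons (-θ) β, Fin.cons ((y m - N m) / (m - θ)) c, d₀, ?_⟩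
      intro t ht
      rw [Fin.sum_univ_succ]
      simp only [Fin.cons_zero, Fin.cons_succ, one_mul]
      rcases eq_or_ne t m with heq | htm
      · rw [heq]
        have hmax : max 0 (m + -θ) = m - θ := by
          rw [max_eq_right] <;> linarith
        rw [hmax, div_mul_cancel₀ _ (by linarith : m - θ ≠ 0)]
        have hNm : N m = d₀ + ∑ i, c i * max 0 (α i * m + β i) := rfl
        linarith [hNm]
      · have ht' : t ∈ S' := Finset.mem_erase.mpr ⟨htm, ht⟩
        have hmax : max 0 (t + -θ) = 0 := by
          rw [max_eq_left]
          have := hθle t ht'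
          linarith
        rw [hmax, mul_zero]
        simpa using h t ht'

/-- Every isomorphism-invariant real-valued function on graphs of size at most `b`
is perfectly approximated by an encoding `Alg` that is iso-injective on graphs of
size at most `b`, composed with a single-hidden-layer ReLU neural network. -/
theorem invariant_function_eq_nn_of_isoInjective (b d : ℕ)
    (Alg : MGraph → EuclideanSpace ℝ (Fin d)) (f : MGraph → ℝ)
    (hAlg : ∀ G H : MGraph, MGraph.size G ≤ b → MGraph.size H ≤ b →
      Alg G = Alg H → MGraph.Iso G H)
    (hf : ∀ G H : MGraph, MGraph.Iso G H → f G = f H) :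
    ∃ (n : ℕ) (a : Fin n → EuclideanSpace ℝ (Fin d)) (b' c : Fin n → ℝ) (d₀ : ℝ),
      ∀ G : MGraph, MGraph.size G ≤ b →
        f G = d₀ + ∑ i, c i * max 0 ((inner ℝ (a i) (Alg G) : ℝ) + b' i) := by
  classical
  have hfin := mgraph_size_le_finite b
  set F : Finset MGraph := hfin.toFinset with hF
  have hFmem : ∀ G : MGraph, G ∈ F ↔ G.size ≤ b := by
    intro G; rw [hF, Set.Finite.mem_toFinset]; rfl
  set A : Finset (EuclideanSpace ℝ (Fin d)) := F.image Alg with hA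
  set T : Finset (EuclideanSpace ℝ (Fin d)) :=
    ((A ×ˢ A).image (fun p => p.1 - p.2)).erase 0 with hT
  obtain ⟨v, hv⟩ := exists_separating_vector T (fun w hw => Finset.ne_of_mem_erase hw)
  -- injectivity of the linear projection on the image A
  have hinj : ∀ G H : MGraph, G.size ≤ b → H.size ≤ b →
      ⟪v, Alg G⟫ = ⟪v, Alg H⟫ → Alg G = Alg H := by
    intro G H hG hH heq
    by_contra hne
    have hmem : Alg G - Alg H ∈ T := by
      rw [hT]
      refine Finset.mem_erase.mpr ⟨sub_ne_zero.mpr hne, ?_⟩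
      exact Finset.mem_image.mpr ⟨(Alg G, Alg H),
        Finset.mem_product.mpr ⟨Finset.mem_image_of_mem _ ((hFmem G).mpr hG),
          Finset.mem_image_of_mem _ ((hFmem H).mpr hH)⟩, rfl⟩
    exact hv _ hmem (by rw [inner_sub_right]; linarith)
  set y : ℝ → ℝ := fun t =>
    if h : ∃ G : MGraph, G.size ≤ b ∧ ⟪v, Alg G⟫ = t then f h.choose else 0 with hy
  have hyval : ∀ G : MGraph, G.size ≤ b → y ⟪v, Alg G⟫ = f G := by
    intro G hG
    have hex : ∃ G' : MGraph, G'.size ≤ b ∧ ⟪v, Alg G'⟫ = ⟪v, Alg G⟫ := ⟨G, hG, rfl⟩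
    rw [hy]
    simp only [hex, dif_pos]
    obtain ⟨h1, h2⟩ := hex.choose_spec
    exact hf _ _ (hAlg _ _ h1 hG (hinj _ _ h1 hG h2))
  obtain ⟨n, α, β, c, d₀, hnet⟩ := relu_interp (A.image (fun x => ⟪v, x⟫)) y
  refine ⟨n, fun i => α i • v, β, c, d₀, ?_⟩
  intro G hG
  have hmem : ⟪v, Alg G⟫ ∈ A.image (fun x => ⟪v, x⟫) :=
    Finset.mem_image_of_mem _ (Finset.mem_image_of_mem _ ((hFmem G).mpr hG))
  have := hnet _ hmem
  rw [hyval G hG] at this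
  rw [this]
  congr 1
  apply Finset.sum_congr rfl
  intro i _
  rw [real_inner_smul_left]
end

section
/- Define on natural numbers the Cantor pairing τ(i, j) = (i + j)(i + j + 1)/2 + j, the iterated pairing τ⁴(y, h, m, n) = τ(τ(τ(y, h), m), n), and ρ(i, j) = (i + j, i·j). Define r(y₁, h₁, m₁, n₁, y₂, h₂, m₂, n₂, b) = τ(τ(u + v, u·v), b) where u = τ⁴(y₁, h₁, m₁, n₁) and v = τ⁴(y₂, h₂, m₂, n₂). Then r is injective up to swapping the two quadruples: for all natural numbers, if r(y₁, h₁, m₁, n₁, y₂, h₂, m₂, n₂, b) = r(y₁', h₁', m₁', n₁', y₂', h₂', m₂', n₂', b'), then b = b' and either ((y₁, h₁, m₁, n₁), (y₂, h₂, m₂, n₂)) = ((y₁', h₁', m₁', n₁'), (y₂', h₂', m₂', n₂')) or ((y₁, h₁, m₁, n₁), (y₂, h₂, m₂, n₂)) = ((y₂', h₂', m₂', n₂'), (y₁', h₁', m₁', n₁')). -/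
/-- The Cantor pairing function on naturals: `τ(i, j) = (i + j)(i + j + 1)/2 + j`. -/
def tauN (i j : ℕ) : ℕ := (i + j) * (i + j + 1) / 2 + j

/-- Iterated pairing `τ⁴(y, h, m, n) = τ(τ(τ(y, h), m), n)`. -/
def tau4 (y h m n : ℕ) : ℕ := tauN (tauN (tauN y h) m) n

/-- `r = τ(τ(ρ(τ⁴(quadruple 1), τ⁴(quadruple 2))), b)` where `ρ(u, v) = (u + v, u·v)`
and `τ` applied to the pair `ρ(u, v)` means `τ(u + v, u·v)`. -/
def rComb (y₁ h₁ m₁ n₁ y₂ h₂ m₂ n₂ b : ℕ) : ℕ :=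
  tauN (tauN (tau4 y₁ h₁ m₁ n₁ + tau4 y₂ h₂ m₂ n₂)
    (tau4 y₁ h₁ m₁ n₁ * tau4 y₂ h₂ m₂ n₂)) b

private def T (s : ℕ) : ℕ := s * (s + 1) / 2

private lemma T_succ (s : ℕ) : T (s + 1) = T s + (s + 1) := by
  unfold T
  have h : (s + 1) * (s + 1 + 1) = s * (s + 1) + (s + 1) * 2 := by ring
  rw [h, Nat.add_mul_div_right _ _ (by norm_num : (0:ℕ) < 2)]

private lemma tauN_eq (i j : ℕ) : tauN i j = T (i + j) + j := rfl

private lemma T_mono {s t : ℕ} (h : s < t) : T s + s < T t := by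
  induction t with
  | zero => omega
  | succ t ih =>
    rw [T_succ]
    rcases Nat.lt_succ_iff_lt_or_eq.mp h with h' | h'
    · have := ih h'
      have : T t ≤ T (t) := le_refl _
      have hle : T t + t < T t + (t+1) := by omega
      have := ih h'
      omega
    · subst h'
      omega

private lemma tauN_inj {i j i' j' : ℕ} (h : tauN i j = tauN i' j') : i = i' ∧ j = j' := by
  rw [tauN_eq, tauN_eq] at h
  have hs : i + j = i' + j' := by
    by_contra hne
    rcases Nat.lt_or_ge (i + j) (i' + j') with hlt | hge
    · have := T_mono hlt
      omega
    · have hlt : i' + j' < i + j := by omega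
      have := T_mono hlt
      omega
  rw [hs] at h
  omega

private lemma vieta {u v u' v' : ℕ} (hs : u + v = u' + v') (hp : u * v = u' * v') :
    (u = u' ∧ v = v') ∨ (u = v' ∧ v = u') := by
  have key : (u : ℤ) = u' ∨ (u : ℤ) = v' := by
    have h0 : ((u : ℤ) - u') * ((u : ℤ) - v') = 0 := by
      have hs' : (u : ℤ) + v = (u' : ℤ) + v' := by exact_mod_cast hs
      have hp' : (u : ℤ) * v = (u' : ℤ) * v' := by exact_mod_cast hp
      nlinarith [hs', hp']
    rcases mul_eq_zero.mp h0 with h | h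
    · left; linarith
    · right; linarith
  rcases key with h | h
  · left
    have : u = u' := by exact_mod_cast h
    omega
  · right
    have : u = v' := by exact_mod_cast h
    omega

private lemma tau4_inj {y h m n y' h' m' n' : ℕ}
    (he : tau4 y h m n = tau4 y' h' m' n') : y = y' ∧ h = h' ∧ m = m' ∧ n = n' := by
  unfold tau4 at he
  obtain ⟨h1, h2⟩ := tauN_inj he
  obtain ⟨h3, h4⟩ := tauN_inj h1
  obtain ⟨h5, h6⟩ := tauN_inj h3
  exact ⟨h5, h6, h4, h2⟩

/-- `r` is injective up to swapping the two quadruples. -/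
theorem rComb_injective_up_to_swap
    (y₁ h₁ m₁ n₁ y₂ h₂ m₂ n₂ b y₁' h₁' m₁' n₁' y₂' h₂' m₂' n₂' b' : ℕ)
    (h : rComb y₁ h₁ m₁ n₁ y₂ h₂ m₂ n₂ b = rComb y₁' h₁' m₁' n₁' y₂' h₂' m₂' n₂' b') :
    b = b' ∧
      ((((y₁, h₁, m₁, n₁), (y₂, h₂, m₂, n₂)) =
          (((y₁', h₁', m₁', n₁'), (y₂', h₂', m₂', n₂')))) ∨
       (((y₁, h₁, m₁, n₁), (y₂, h₂, m₂, n₂)) =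
          (((y₂', h₂', m₂', n₂'), (y₁', h₁', m₁', n₁'))))) := by
  unfold rComb at h
  obtain ⟨h1, hb⟩ := tauN_inj h
  obtain ⟨hs, hp⟩ := tauN_inj h1
  refine ⟨hb, ?_⟩
  rcases vieta hs hp with ⟨hu, hv⟩ | ⟨hu, hv⟩
  · left
    obtain ⟨a1, a2, a3, a4⟩ := tau4_inj hu
    obtain ⟨b1, b2, b3, b4⟩ := tau4_inj hv
    simp_all
  · right
    obtain ⟨a1, a2, a3, a4⟩ := tau4_inj hu
    obtain ⟨b1, b2, b3, b4⟩ := tau4_inj hv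
    simp_all
end

section
/- Let 𝒳 be a countable type and N : ℕ. Then there exists a function f : 𝒳 → ℝ such that the summation map X ↦ ∑_{x ∈ X} f x is injective on multisets over 𝒳 of cardinality at most N: for all multisets X Y over 𝒳 with Multiset.card X ≤ N and Multiset.card Y ≤ N, if ∑_{x ∈ X} f x = ∑_{x ∈ Y} f x then X = Y. Moreover, for any function g from {multisets over 𝒳 of cardinality at most N} to ℝ, there exists φ : ℝ → ℝ such that g X = φ(∑_{x ∈ X} f x) for every such multiset X. -/
private lemma multiset_decomp (A : Multiset ℕ) :
    A = Multiset.replicate (Multiset.count 0 A) 0 +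
        ((A.filter (· ≠ 0)).map (· - 1)).map (· + 1) := by
  rw [Multiset.map_map]
  have h1 : ((A.filter (· ≠ 0)).map ((· + 1) ∘ (· - 1))) = A.filter (· ≠ 0) := by
    rw [Multiset.map_congr rfl (fun x hx => ?_), Multiset.map_id']
    have := Multiset.of_mem_filter hx
    simp at this ⊢
    omega
  rw [h1, show Multiset.replicate (Multiset.count 0 A) 0 = A.filter (· = 0) from
    (Multiset.filter_eq' A 0).symm, Multiset.filter_add_not]

private lemma sum_decomp (b : ℕ) (A : Multiset ℕ) :
    (A.map (b ^ ·)).sum =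
      Multiset.count 0 A + b * (((A.filter (· ≠ 0)).map (· - 1)).map (b ^ ·)).sum := by
  conv_lhs => rw [multiset_decomp A]
  rw [Multiset.map_add, Multiset.sum_add, Multiset.map_replicate, Multiset.sum_replicate]
  simp only [Multiset.map_map, Function.comp]
  rw [← Multiset.sum_map_mul_left]
  congr 1
  · simp
  · exact congrArg _ (Multiset.map_congr rfl fun x _ => by simp [pow_succ]; ring)

private lemma key (b : ℕ) (hb : 2 ≤ b) :
    ∀ S : ℕ, ∀ A B : Multiset ℕ, Multiset.card A < b → Multiset.card B < b →
      (A.map (b ^ ·)).sum = S → (B.map (b ^ ·)).sum = S → A = B := by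
  intro S
  induction S using Nat.strong_induction_on with
  | _ S ih =>
    intro A B hA hB hAS hBS
    rcases Nat.eq_zero_or_pos S with hS | hS
    · subst hS
      have hA0 : A = 0 := by
        by_contra h
        obtain ⟨a, ha⟩ := Multiset.exists_mem_of_ne_zero h
        have : b ^ a ≤ (A.map (b ^ ·)).sum :=
          Multiset.single_le_sum (by simp) _ (Multiset.mem_map_of_mem _ ha)
        have hpos : 0 < b ^ a := Nat.pow_pos (by omega)
        omega
      have hB0 : B = 0 := by
        by_contra h
        obtain ⟨a, ha⟩ := Multiset.exists_mem_of_ne_zero h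
        have : b ^ a ≤ (B.map (b ^ ·)).sum :=
          Multiset.single_le_sum (by simp) _ (Multiset.mem_map_of_mem _ ha)
        have hpos : 0 < b ^ a := Nat.pow_pos (by omega)
        omega
      rw [hA0, hB0]
    · -- digit extraction
      set A' := (A.filter (· ≠ 0)).map (· - 1) with hA'
      set B' := (B.filter (· ≠ 0)).map (· - 1) with hB'
      have hdA := sum_decomp b A
      have hdB := sum_decomp b B
      have hcA : Multiset.count 0 A < b := lt_of_le_of_lt (Multiset.count_le_card _ _) hA
      have hcB : Multiset.count 0 B < b := lt_of_le_of_lt (Multiset.count_le_card _ _) hB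
      have hmodA : S % b = Multiset.count 0 A := by
        rw [← hAS, hdA, Nat.add_mul_mod_self_left, Nat.mod_eq_of_lt hcA]
      have hmodB : S % b = Multiset.count 0 B := by
        rw [← hBS, hdB, Nat.add_mul_mod_self_left, Nat.mod_eq_of_lt hcB]
      have hdivA : S / b = (A'.map (b ^ ·)).sum := by
        rw [← hAS, hdA, Nat.add_mul_div_left _ _ (by omega : 0 < b),
          Nat.div_eq_of_lt hcA, Nat.zero_add]
      have hdivB : S / b = (B'.map (b ^ ·)).sum := by
        rw [← hBS, hdB, Nat.add_mul_div_left _ _ (by omega : 0 < b),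
          Nat.div_eq_of_lt hcB, Nat.zero_add]
      have hcardA' : Multiset.card A' < b := by
        have : Multiset.card A' ≤ Multiset.card A := by
          rw [hA', Multiset.card_map]
          exact Multiset.card_le_card (Multiset.filter_le _ _)
        omega
      have hcardB' : Multiset.card B' < b := by
        have : Multiset.card B' ≤ Multiset.card B := by
          rw [hB', Multiset.card_map]
          exact Multiset.card_le_card (Multiset.filter_le _ _)
        omega
      have hlt : S / b < S := Nat.div_lt_self hS (by omega)
      have hAB' : A' = B' := ih (S / b) hlt A' B' hcardA' hcardB' hdivA.symm hdivB.symm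
      rw [multiset_decomp A, multiset_decomp B, ← hA', ← hB', hAB', ← hmodA, ← hmodB]

/-- For a countable type `𝒳` and bound `N`, there is `f : 𝒳 → ℝ` so that summing
`f` over a multiset is injective on multisets of cardinality at most `N`; moreover
every real-valued function `g` on such multisets decomposes as
`g X = φ (∑_{x ∈ X} f x)` for some `φ : ℝ → ℝ`. -/
theorem exists_injective_multiset_sum (𝒳 : Type*) [Countable 𝒳] (N : ℕ) :
    ∃ f : 𝒳 → ℝ,
      (∀ X Y : Multiset 𝒳, Multiset.card X ≤ N → Multiset.card Y ≤ N →
        (X.map f).sum = (Y.map f).sum → X = Y) ∧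
      (∀ g : {X : Multiset 𝒳 // Multiset.card X ≤ N} → ℝ,
        ∃ φ : ℝ → ℝ, ∀ X : {X : Multiset 𝒳 // Multiset.card X ≤ N},
          g X = φ ((X.1.map f).sum)) := by
  obtain ⟨e, he⟩ := Countable.exists_injective_nat 𝒳
  set b := N + 2 with hb
  set f : 𝒳 → ℝ := fun x => ((b ^ (e x) : ℕ) : ℝ) with hf
  have hpart1 : ∀ X Y : Multiset 𝒳, Multiset.card X ≤ N → Multiset.card Y ≤ N →
      (X.map f).sum = (Y.map f).sum → X = Y := by
    intro X Y hX hY hsum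
    have hcast : ∀ Z : Multiset 𝒳, (Z.map f).sum = (((Z.map e).map (b ^ ·)).sum : ℕ) := by
      intro Z
      rw [Nat.cast_multiset_sum, Multiset.map_map, Multiset.map_map]
      rfl
    have hnat : ((X.map e).map (b ^ ·)).sum = ((Y.map e).map (b ^ ·)).sum := by
      have := hsum
      rw [hcast X, hcast Y] at this
      exact_mod_cast this
    have hkey := key b (by omega) ((Y.map e).map (b ^ ·)).sum (X.map e) (Y.map e)
      (by simp only [Multiset.card_map]; omega) (by simp only [Multiset.card_map]; omega)
      hnat rfl
    exact Multiset.map_injective he hkey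
  refine ⟨f, hpart1, fun g => ?_⟩
  have hinj : Function.Injective
      (fun X : {X : Multiset 𝒳 // Multiset.card X ≤ N} => (X.1.map f).sum) := by
    intro X Y h
    exact Subtype.ext (hpart1 X.1 Y.1 X.2 Y.2 h)
  exact ⟨Function.extend _ g 0, fun X => (hinj.extend_apply g 0 X).symm⟩
end

section
/- Let 𝒳 be a type, Z : 𝒳 → ℕ an injective function, and N : ℕ. Define f : 𝒳 → ℝ by f x = (N : ℝ)^{-Z x} (i.e., N to the power minus Z x). Then for all multisets X Y over 𝒳 with Multiset.card X < N and Multiset.card Y < N, if ∑_{x ∈ X} f x = ∑_{x ∈ Y} f x then X = Y. -/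
/-- Key analytic lemma: if `x` has minimal `Z`-value among elements of `Y`,
`x ∈ X` but `x ∉ Y`, and `card Y < N`, then the sums cannot be equal. -/
lemma aux_notmem {𝒳 : Type*} (Z : 𝒳 → ℕ) (hZ : Function.Injective Z) {N : ℕ}
    {X Y : Multiset 𝒳} (hY : Multiset.card Y < N) {x : 𝒳} (hx : x ∈ X)
    (hmin : ∀ y ∈ Y, Z x ≤ Z y) (hxY : x ∉ Y)
    (hsum : (X.map fun x => (N : ℝ) ^ (-(Z x : ℤ))).sum =
        (Y.map fun x => (N : ℝ) ^ (-(Z x : ℤ))).sum) : False := by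
  have hN : 0 < N := lt_of_le_of_lt (Nat.zero_le _) hY
  have hNR : (0:ℝ) < N := by exact_mod_cast hN
  have hNR1 : (1:ℝ) ≤ N := by exact_mod_cast hN
  have h1 : ∀ y ∈ Y, Z x + 1 ≤ Z y := by
    intro y hy
    rcases lt_or_eq_of_le (hmin y hy) with h | h
    · omega
    · exact absurd (hZ h ▸ hy) hxY
  have hub : (Y.map fun x => (N : ℝ) ^ (-(Z x : ℤ))).sum ≤
      (Multiset.card Y) • ((N:ℝ) ^ (-(Z x + 1 : ℤ))) := by
    refine le_trans (Multiset.sum_le_card_nsmul _ _ ?_) (by rw [Multiset.card_map])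
    intro b hb
    obtain ⟨y, hy, rfl⟩ := Multiset.mem_map.1 hb
    apply zpow_le_zpow_right₀ hNR1
    have := h1 y hy
    omega
  have hpos : (0:ℝ) < (N:ℝ) ^ (-(Z x + 1 : ℤ)) := zpow_pos hNR _
  have hub2 : ((Multiset.card Y) : ℝ) * ((N:ℝ) ^ (-(Z x + 1 : ℤ))) <
      (N:ℝ) * ((N:ℝ) ^ (-(Z x + 1 : ℤ))) := by
    apply mul_lt_mul_of_pos_right _ hpos
    exact_mod_cast hY
  have heq : (N:ℝ) * ((N:ℝ) ^ (-(Z x + 1 : ℤ))) = (N:ℝ) ^ (-(Z x : ℤ)) := by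
    rw [mul_comm, ← zpow_add_one₀ hNR.ne']
    congr 1
    ring
  have hlb : (N:ℝ) ^ (-(Z x : ℤ)) ≤ (X.map fun x => (N : ℝ) ^ (-(Z x : ℤ))).sum := by
    apply Multiset.single_le_sum
    · intro b hb
      obtain ⟨y, hy, rfl⟩ := Multiset.mem_map.1 hb
      exact (zpow_pos hNR _).le
    · exact Multiset.mem_map.2 ⟨x, hx, rfl⟩
  rw [nsmul_eq_mul] at hub
  rw [hsum] at hlb
  linarith

/-- Let `Z : 𝒳 → ℕ` be injective and `f x = (N : ℝ) ^ (-(Z x))`. Then summing `f`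
over a multiset determines the multiset, among multisets of cardinality
less than `N`. -/
theorem multiset_sum_injective_of_pow (𝒳 : Type*) (Z : 𝒳 → ℕ)
    (hZ : Function.Injective Z) (N : ℕ) :
    ∀ X Y : Multiset 𝒳, Multiset.card X < N → Multiset.card Y < N →
      (X.map fun x => (N : ℝ) ^ (-(Z x : ℤ))).sum =
        (Y.map fun x => (N : ℝ) ^ (-(Z x : ℤ))).sum →
      X = Y := by
  suffices h : ∀ n, ∀ X Y : Multiset 𝒳, Multiset.card X + Multiset.card Y ≤ n →
      Multiset.card X < N → Multiset.card Y < N →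
      (X.map fun x => (N : ℝ) ^ (-(Z x : ℤ))).sum =
        (Y.map fun x => (N : ℝ) ^ (-(Z x : ℤ))).sum → X = Y by
    intro X Y hX hY hs
    exact h _ X Y le_rfl hX hY hs
  intro n
  induction n with
  | zero =>
    intro X Y hn _ _ _
    have hX : X = 0 := Multiset.card_eq_zero.1 (by omega)
    have hY : Y = 0 := Multiset.card_eq_zero.1 (by omega)
    rw [hX, hY]
  | succ n ih =>
    intro X Y hn hX hY hs
    classical
    -- positivity facts
    have key_pos : ∀ (W : Multiset 𝒳), W ≠ 0 → Multiset.card W < N →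
        0 < (W.map fun x => (N : ℝ) ^ (-(Z x : ℤ))).sum := by
      intro W hW0 hWN
      have hN : 0 < N := by
        have := Multiset.card_pos.2 hW0
        omega
      have hNR : (0:ℝ) < N := by exact_mod_cast hN
      obtain ⟨w, hw⟩ := Multiset.exists_mem_of_ne_zero hW0
      refine lt_of_lt_of_le (zpow_pos hNR (-(Z w : ℤ))) ?_
      apply Multiset.single_le_sum
      · intro b hb
        obtain ⟨y, _, rfl⟩ := Multiset.mem_map.1 hb
        exact (zpow_pos hNR _).le
      · exact Multiset.mem_map.2 ⟨w, hw, rfl⟩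
    by_cases hX0 : X = 0
    · subst hX0
      by_contra hY0
      have := key_pos Y (fun h => hY0 h.symm) hY
      rw [← hs] at this
      simp at this
    by_cases hY0 : Y = 0
    · subst hY0
      exfalso
      have := key_pos X hX0 hX
      rw [hs] at this
      simp at this
    -- pick an element with minimal Z-value in X + Y
    have hne : (X + Y).toFinset.Nonempty := by
      obtain ⟨x, hx⟩ := Multiset.exists_mem_of_ne_zero hX0
      exact ⟨x, Multiset.mem_toFinset.2 (Multiset.mem_add.2 (Or.inl hx))⟩
    obtain ⟨x, hxm, hmin⟩ := Finset.exists_min_image (X + Y).toFinset Z hne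
    have hmin' : ∀ z ∈ X + Y, Z x ≤ Z z := fun z hz =>
      hmin z (Multiset.mem_toFinset.2 hz)
    have hxXY : x ∈ X + Y := Multiset.mem_toFinset.1 hxm
    have hxboth : x ∈ X ∧ x ∈ Y := by
      rcases Multiset.mem_add.1 hxXY with hxX | hxY
      · refine ⟨hxX, ?_⟩
        by_contra hxY
        exact aux_notmem Z hZ hY hxX
          (fun y hy => hmin' y (Multiset.mem_add.2 (Or.inr hy))) hxY hs
      · refine ⟨?_, hxY⟩
        by_contra hxX
        exact aux_notmem Z hZ hX hxY
          (fun y hy => hmin' y (Multiset.mem_add.2 (Or.inl hy))) hxX hs.symm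
    obtain ⟨hxX, hxY⟩ := hxboth
    have hXe := (Multiset.cons_erase hxX).symm
    have hYe := (Multiset.cons_erase hxY).symm
    rw [hXe, hYe, Multiset.map_cons, Multiset.map_cons, Multiset.sum_cons,
      Multiset.sum_cons] at hs
    have hs' := add_left_cancel hs
    have hcX := Multiset.card_erase_of_mem hxX
    have hcY := Multiset.card_erase_of_mem hxY
    have hcX1 := Multiset.card_pos_iff_exists_mem.2 ⟨x, hxX⟩
    have hcY1 := Multiset.card_pos_iff_exists_mem.2 ⟨x, hxY⟩
    simp only [Nat.pred_eq_sub_one] at hcX hcY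
    have h1 : X.erase x = Y.erase x := by
      apply ih (X.erase x) (Y.erase x) (by omega) (by omega) (by omega) hs'
    rw [hXe, hYe, h1]
end

section
/- Let G : SimpleGraph V and G* : SimpleGraph W be simple graphs with vertex labelings l : V → ℕ+ and l* : W → ℕ+. Let S₁, S₂ be subgraphs of G and S₁*, S₂* be subgraphs of G*, and suppose there are label-preserving graph isomorphisms φ₁ : S₁.coe ≃g S₁*.coe and φ₂ : S₂.coe ≃g S₂*.coe (label-preserving meaning l*(φᵢ v) = l v for every vertex v of Sᵢ). Assume furthermore that l is injective on S₁.verts ∪ S₂.verts, that l* is injective on S₁*.verts ∪ S₂*.verts, and that the set of labels {l v | v ∈ S₁.verts ∩ S₂.verts} equals the set of labels {l* w | w ∈ S₁*.verts ∩ S₂*.verts}. Then there exists a label-preserving graph isomorphism (S₁ ⊔ S₂).coe ≃g (S₁* ⊔ S₂*).coe. -/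
open SimpleGraph

private lemma glue_aux {V W : Type*} {G : SimpleGraph V} {G' : SimpleGraph W}
    {l : V → ℕ+} {l' : W → ℕ+}
    {S₁ S₂ : G.Subgraph} {T₁ T₂ : G'.Subgraph}
    (φ₁ : S₁.coe ≃g T₁.coe) (φ₂ : S₂.coe ≃g T₂.coe)
    (hφ₁ : ∀ v : S₁.verts, l' (↑(φ₁ v)) = l (↑v))
    (hφ₂ : ∀ v : S₂.verts, l' (↑(φ₂ v)) = l (↑v))
    (hl' : Set.InjOn l' (T₁.verts ∪ T₂.verts))
    (hlabels : l '' (S₁.verts ∩ S₂.verts) = l' '' (T₁.verts ∩ T₂.verts)) :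
    ∃ f : (S₁ ⊔ S₂).verts → (T₁ ⊔ T₂).verts,
      (∀ v, l' ↑(f v) = l ↑v) ∧
      (∀ (v : (S₁ ⊔ S₂).verts) (h : ↑v ∈ S₁.verts), (↑(f v) : W) = ↑(φ₁ ⟨↑v, h⟩)) ∧
      (∀ (v : (S₁ ⊔ S₂).verts) (h : ↑v ∈ S₂.verts), (↑(f v) : W) = ↑(φ₂ ⟨↑v, h⟩)) ∧
      (∀ a b, (S₁ ⊔ S₂).coe.Adj a b → (T₁ ⊔ T₂).coe.Adj (f a) (f b)) := by
  classical
  have h12 : ∀ (v : V) (h1 : v ∈ S₁.verts) (h2 : v ∈ S₂.verts),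
      (↑(φ₁ ⟨v, h1⟩) : W) = ↑(φ₂ ⟨v, h2⟩) ∧ (↑(φ₁ ⟨v, h1⟩) : W) ∈ T₂.verts := by
    intro v h1 h2
    have hmem : l v ∈ l' '' (T₁.verts ∩ T₂.verts) := by
      rw [← hlabels]; exact ⟨v, ⟨h1, h2⟩, rfl⟩
    obtain ⟨w, hw, hlw⟩ := hmem
    have e1 : (↑(φ₁ ⟨v, h1⟩) : W) = w := by
      apply hl' (Or.inl (φ₁ ⟨v, h1⟩).2) (Or.inl hw.1)
      rw [hφ₁ ⟨v, h1⟩, hlw]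
    have e2 : (↑(φ₂ ⟨v, h2⟩) : W) = w := by
      apply hl' (Or.inr (φ₂ ⟨v, h2⟩).2) (Or.inl hw.1)
      rw [hφ₂ ⟨v, h2⟩, hlw]
    refine ⟨e1.trans e2.symm, ?_⟩
    rw [e1]; exact hw.2
  have vmem : ∀ v : (S₁ ⊔ S₂).verts, (↑v : V) ∈ S₁.verts ∨ (↑v : V) ∈ S₂.verts :=
    fun v => v.2
  refine ⟨fun v => if h : (↑v : V) ∈ S₁.verts then
      ⟨↑(φ₁ ⟨↑v, h⟩), Or.inl (φ₁ ⟨↑v, h⟩).2⟩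
    else
      ⟨↑(φ₂ ⟨↑v, (vmem v).resolve_left h⟩), Or.inr (φ₂ ⟨↑v, (vmem v).resolve_left h⟩).2⟩,
    ?_, ?_, ?_, ?_⟩
  · intro v
    by_cases h : (↑v : V) ∈ S₁.verts
    · simp only [dif_pos h]; exact hφ₁ ⟨↑v, h⟩
    · simp only [dif_neg h]; exact hφ₂ ⟨↑v, (vmem v).resolve_left h⟩
  · intro v h; simp only [dif_pos h]
  · intro v h
    by_cases h1 : (↑v : V) ∈ S₁.verts
    · simp only [dif_pos h1]; exact (h12 ↑v h1 h).1
    · simp only [dif_neg h1]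
  · intro a b hab
    rcases hab with hab | hab
    · have ha : (↑a : V) ∈ S₁.verts := hab.fst_mem
      have hb : (↑b : V) ∈ S₁.verts := hab.snd_mem
      have : T₁.coe.Adj (φ₁ ⟨↑a, ha⟩) (φ₁ ⟨↑b, hb⟩) := φ₁.map_rel_iff.mpr hab
      simp only [dif_pos ha, dif_pos hb]
      exact Or.inl this
    · have ha : (↑a : V) ∈ S₂.verts := hab.fst_mem
      have hb : (↑b : V) ∈ S₂.verts := hab.snd_mem
      have hT : T₂.coe.Adj (φ₂ ⟨↑a, ha⟩) (φ₂ ⟨↑b, hb⟩) := φ₂.map_rel_iff.mpr hab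
      by_cases h1 : (↑a : V) ∈ S₁.verts <;> by_cases h2 : (↑b : V) ∈ S₁.verts <;>
        simp only [dif_pos, dif_neg, h1, h2] <;>
        refine Or.inr ?_
      · show T₂.Adj ↑(φ₁ ⟨↑a, h1⟩) ↑(φ₁ ⟨↑b, h2⟩)
        rw [(h12 ↑a h1 ha).1, (h12 ↑b h2 hb).1]; exact hT
      · show T₂.Adj ↑(φ₁ ⟨↑a, h1⟩) _
        rw [(h12 ↑a h1 ha).1]; exact hT
      · show T₂.Adj _ ↑(φ₁ ⟨↑b, h2⟩)
        rw [(h12 ↑b h2 hb).1]; exact hT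
      · exact hT

private lemma glue_li {V W : Type*} {G : SimpleGraph V} {G' : SimpleGraph W}
    {S₁ S₂ : G.Subgraph} {T₁ T₂ : G'.Subgraph}
    (φ₁ : S₁.coe ≃g T₁.coe) (φ₂ : S₂.coe ≃g T₂.coe)
    (f : (S₁ ⊔ S₂).verts → (T₁ ⊔ T₂).verts) (g : (T₁ ⊔ T₂).verts → (S₁ ⊔ S₂).verts)
    (hf1 : ∀ (v : (S₁ ⊔ S₂).verts) (h : ↑v ∈ S₁.verts), (↑(f v) : W) = ↑(φ₁ ⟨↑v, h⟩))
    (hf2 : ∀ (v : (S₁ ⊔ S₂).verts) (h : ↑v ∈ S₂.verts), (↑(f v) : W) = ↑(φ₂ ⟨↑v, h⟩))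
    (hg1 : ∀ (w : (T₁ ⊔ T₂).verts) (h : ↑w ∈ T₁.verts), (↑(g w) : V) = ↑(φ₁.symm ⟨↑w, h⟩))
    (hg2 : ∀ (w : (T₁ ⊔ T₂).verts) (h : ↑w ∈ T₂.verts), (↑(g w) : V) = ↑(φ₂.symm ⟨↑w, h⟩)) :
    ∀ v, g (f v) = v := by
  intro v
  apply Subtype.ext
  rcases (v.2 : (↑v : V) ∈ S₁.verts ∨ (↑v : V) ∈ S₂.verts) with h | h
  · have hT : (↑(f v) : W) ∈ T₁.verts := by
      rw [hf1 v h]; exact (φ₁ ⟨↑v, h⟩).2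
    rw [hg1 (f v) hT]
    have : (⟨↑(f v), hT⟩ : T₁.verts) = φ₁ ⟨↑v, h⟩ := Subtype.ext (hf1 v h)
    rw [this, RelIso.symm_apply_apply]
  · have hT : (↑(f v) : W) ∈ T₂.verts := by
      rw [hf2 v h]; exact (φ₂ ⟨↑v, h⟩).2
    rw [hg2 (f v) hT]
    have : (⟨↑(f v), hT⟩ : T₂.verts) = φ₂ ⟨↑v, h⟩ := Subtype.ext (hf2 v h)
    rw [this, RelIso.symm_apply_apply]

/-- Gluing label-preserving isomorphisms: if `φ₁ : S₁ ≃g T₁` and `φ₂ : S₂ ≃g T₂`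
are label-preserving isomorphisms of subgraphs, labels are unique within
`S₁.verts ∪ S₂.verts` and within `T₁.verts ∪ T₂.verts`, and the label sets of the
intersections agree, then there is a label-preserving isomorphism
`(S₁ ⊔ S₂).coe ≃g (T₁ ⊔ T₂).coe`. -/
theorem glue_label_preserving_iso {V W : Type*}
    (G : SimpleGraph V) (G' : SimpleGraph W)
    (l : V → ℕ+) (l' : W → ℕ+)
    (S₁ S₂ : G.Subgraph) (T₁ T₂ : G'.Subgraph)
    (φ₁ : S₁.coe ≃g T₁.coe) (φ₂ : S₂.coe ≃g T₂.coe)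
    (hφ₁ : ∀ v : S₁.verts, l' (↑(φ₁ v)) = l (↑v))
    (hφ₂ : ∀ v : S₂.verts, l' (↑(φ₂ v)) = l (↑v))
    (hl : Set.InjOn l (S₁.verts ∪ S₂.verts))
    (hl' : Set.InjOn l' (T₁.verts ∪ T₂.verts))
    (hlabels : l '' (S₁.verts ∩ S₂.verts) = l' '' (T₁.verts ∩ T₂.verts)) :
    ∃ φ : (S₁ ⊔ S₂).coe ≃g (T₁ ⊔ T₂).coe,
      ∀ v : (S₁ ⊔ S₂).verts, l' (↑(φ v)) = l (↑v) := by
  obtain ⟨f, hfl, hf1, hf2, hfadj⟩ := glue_aux φ₁ φ₂ hφ₁ hφ₂ hl' hlabels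
  have hψ₁ : ∀ w : T₁.verts, l (↑(φ₁.symm w)) = l' (↑w) := by
    intro w
    have := hφ₁ (φ₁.symm w)
    rw [RelIso.apply_symm_apply] at this
    exact this.symm
  have hψ₂ : ∀ w : T₂.verts, l (↑(φ₂.symm w)) = l' (↑w) := by
    intro w
    have := hφ₂ (φ₂.symm w)
    rw [RelIso.apply_symm_apply] at this
    exact this.symm
  obtain ⟨g, hgl, hg1, hg2, hgadj⟩ := glue_aux φ₁.symm φ₂.symm hψ₁ hψ₂ hl hlabels.symm
  have li : ∀ v, g (f v) = v := glue_li φ₁ φ₂ f g hf1 hf2 hg1 hg2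
  have ri : ∀ w, f (g w) = w := by
    refine glue_li φ₁.symm φ₂.symm g f hg1 hg2 ?_ ?_
    · intro v h; rw [hf1 v h]; rfl
    · intro v h; rw [hf2 v h]; rfl
  refine ⟨⟨⟨f, g, li, ri⟩, ?_⟩, hfl⟩
  intro a b
  constructor
  · intro h
    have := hgadj _ _ h
    simp only [Equiv.coe_fn_mk] at this
    rwa [li a, li b] at this
  · exact hfadj a b
end
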